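/- Let p ≥ 3 be a prime, a_1, …, a_{p−1} nonzero in 𝔽_p, and b_1, …, b_p ∈ 𝔽_p with b_p ≠ 0. If the system ∑_{j=1}^{p−1} a_j x_j^{p−1} = 0, ∑_{j=1}^{p} b_j x_j = 0 has no solution in 𝔽_p^p at which some 2×2 Jacobian minor is nonzero, then a_1 = a_2 = ⋯ = a_{p−1}. -/

import Mathlib

open Finset


lemma core_dav {p : ℕ} (n : ℕ) (hn : n + 1 = p) (hn2 : 2 ≤ n) (d : Fin n → ZMod p)
    (h : ∀ S : Finset (Fin n), S.Nonempty → ∑ i ∈ S, d i ≠ 0) :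
    d ⟨0, by omega⟩ = d ⟨1, by omega⟩ := by
  by_contra hne
  haveI : NeZero p := ⟨by omega⟩
  set i0 : Fin n := ⟨0, by omega⟩ with hi0
  set i1 : Fin n := ⟨1, by omega⟩ with hi1
  have hi01 : i0 ≠ i1 := by
    intro hc
    exact absurd (congrArg Fin.val hc) (by show (0 : ℕ) ≠ 1; omega)
  set S : ℕ → Finset (Fin n) := fun k => univ.filter (fun m => (m : ℕ) < k) with hS
  set f : Fin p → ZMod p := fun k => if (k : ℕ) = 0 then d i1 else ∑ m ∈ S k, d m with hf
  have hmem : ∀ (x : Fin n) (k : ℕ), x ∈ S k ↔ (x : ℕ) < k := by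
    intro x k; simp [hS]
  have hsub : ∀ k m : ℕ, k ≤ m → S k ⊆ S m := by
    intro k m hkm x hx
    rw [hmem] at *
    omega
  have key : ∀ k m : Fin p, (k : ℕ) < (m : ℕ) → f k ≠ f m := by
    intro k m hkm
    have hm0 : (m : ℕ) ≠ 0 := by omega
    by_cases hk0 : (k : ℕ) = 0
    · simp only [hf, hk0, if_pos, if_neg hm0]
      by_cases hm1 : (m : ℕ) = 1
      · have hSm : S (m : ℕ) = {i0} := by
          ext x
          rw [hmem, Finset.mem_singleton, hm1]
          constructor
          · intro hx
            refine Fin.ext ?_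
            show (x : ℕ) = 0
            omega
          · intro hx; subst hx; show (0 : ℕ) < 1; omega
        rw [hSm, Finset.sum_singleton]
        exact fun he => hne he.symm
      · intro he
        have h1m : i1 ∈ S (m : ℕ) := (hmem _ _).2 (by show (1 : ℕ) < (m : ℕ); omega)
        have hs : ({i1} : Finset (Fin n)) ⊆ S (m : ℕ) := by
          intro x hx; rw [Finset.mem_singleton] at hx; subst hx; exact h1m
        have hsum := Finset.sum_sdiff (f := d) hs
        rw [Finset.sum_singleton] at hsum
        have hz : ∑ x ∈ S (m : ℕ) \ {i1}, d x = 0 := by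
          linear_combination hsum - he
        refine h _ ⟨i0, ?_⟩ hz
        rw [Finset.mem_sdiff, hmem, Finset.mem_singleton]
        exact ⟨by show (0 : ℕ) < (m : ℕ); omega, hi01⟩
    · simp only [hf, if_neg hk0, if_neg hm0]
      intro he
      have hdiff := Finset.sum_sdiff (f := d) (hsub (k : ℕ) (m : ℕ) (le_of_lt hkm))
      have hz : ∑ x ∈ S (m : ℕ) \ S (k : ℕ), d x = 0 := by
        linear_combination hdiff - he
      have hkn : (k : ℕ) < n := by omega
      have hx : (⟨(k : ℕ), hkn⟩ : Fin n) ∈ S (m : ℕ) \ S (k : ℕ) := by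
        rw [Finset.mem_sdiff, hmem, hmem]
        exact ⟨hkm, by show ¬ ((k : ℕ) < (k : ℕ)); omega⟩
      exact h _ ⟨_, hx⟩ hz
  have hinj : Function.Injective f := by
    intro k m he
    rcases lt_trichotomy (k : ℕ) (m : ℕ) with h1 | h1 | h1
    · exact absurd he (key k m h1)
    · exact Fin.ext h1
    · exact absurd he.symm (key m k h1)
  have hnz : ∀ k : Fin p, f k ≠ 0 := by
    intro k
    by_cases hk0 : (k : ℕ) = 0
    · simp only [hf, if_pos hk0]
      have := h {i1} ⟨i1, Finset.mem_singleton_self _⟩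
      rwa [Finset.sum_singleton] at this
    · simp only [hf, if_neg hk0]
      exact h _ ⟨i0, (hmem _ _).2 (by show (0 : ℕ) < (k : ℕ); omega)⟩
  have h1 : (univ : Finset (Fin p)).image f ⊆ (univ : Finset (ZMod p)).erase 0 := by
    intro y hy
    rw [Finset.mem_image] at hy
    obtain ⟨k, _, rfl⟩ := hy
    exact Finset.mem_erase.2 ⟨hnz k, Finset.mem_univ _⟩
  have h2 := Finset.card_le_card h1
  rw [Finset.card_image_of_injective _ hinj, Finset.card_univ,
    Finset.card_erase_of_mem (Finset.mem_univ _), Finset.card_univ, Fintype.card_fin,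
    ZMod.card] at h2
  omega

lemma dav {p : ℕ} (n : ℕ) (hn : n + 1 = p) (a : Fin n → ZMod p)
    (h : ∀ S : Finset (Fin n), S.Nonempty → ∑ i ∈ S, a i ≠ 0) :
    ∀ i j, a i = a j := by
  intro i j
  rcases eq_or_ne i j with rfl | hij
  · rfl
  have hn2 : 2 ≤ n := by
    have : 1 < Fintype.card (Fin n) := Fintype.one_lt_card_iff.2 ⟨i, j, hij⟩
    simp at this; omega
  set z0 : Fin n := ⟨0, by omega⟩ with hz0
  set z1 : Fin n := ⟨1, by omega⟩ with hz1
  have hz01 : z0 ≠ z1 := by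
    intro hc
    exact absurd (congrArg Fin.val hc) (by show (0 : ℕ) ≠ 1; omega)
  set σ1 : Equiv.Perm (Fin n) := Equiv.swap z0 i with hσ1
  set j' : Fin n := σ1.symm j with hj'
  have hj'0 : j' ≠ z0 := by
    intro hc
    apply hij
    have h1 : σ1 j' = j := by simp [hj']
    have h2 : σ1 z0 = i := by simp [hσ1]
    rw [← h1, hc, h2]
  set σ2 : Equiv.Perm (Fin n) := Equiv.swap z1 j' with hσ2
  set σ : Equiv.Perm (Fin n) := σ2.trans σ1 with hσ
  have hσ0 : σ z0 = i := by
    have h20 : σ2 z0 = z0 := Equiv.swap_apply_of_ne_of_ne hz01 (Ne.symm hj'0)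
    show σ1 (σ2 z0) = i
    rw [h20]
    simp [hσ1]
  have hσj : σ z1 = j := by
    have h21 : σ2 z1 = j' := Equiv.swap_apply_left _ _
    show σ1 (σ2 z1) = j
    rw [h21, hj']
    simp
  have hc : ∀ S : Finset (Fin n), S.Nonempty → ∑ k ∈ S, a (σ k) ≠ 0 := by
    intro S hS
    rw [← Finset.sum_image (g := σ) (f := a) (fun x _ y _ hxy => σ.injective hxy)]
    exact h _ (hS.image σ)
  have := core_dav n hn hn2 (fun k => a (σ k)) hc
  rw [show (⟨0, by omega⟩ : Fin n) = z0 from rfl, show (⟨1, by omega⟩ : Fin n) = z1 from rfl,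
    hσ0, hσj] at this
  exact this

theorem stmt_6 (p : ℕ) (hp : p.Prime) (hp3 : 3 ≤ p)
    (a : Fin (p - 1) → ZMod p) (ha : ∀ j, a j ≠ 0)
    (b : Fin p → ZMod p) (hbp : b ⟨p - 1, by omega⟩ ≠ 0)
    (hns : ¬ ∃ x : Fin p → ZMod p,
      (∑ j : Fin (p - 1), a j * x (Fin.castLE (by omega) j) ^ (p - 1)) = 0 ∧
      (∑ i, b i * x i) = 0 ∧
      ∃ i j : Fin p,
        (if h : (i : ℕ) < p - 1 then (p - 1 : ZMod p) * a ⟨i, h⟩ * x i ^ (p - 2) else 0) * b j -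
        (if h : (j : ℕ) < p - 1 then (p - 1 : ZMod p) * a ⟨j, h⟩ * x j ^ (p - 2) else 0) * b i
          ≠ 0) :
    ∀ i j, a i = a j := by
  haveI : Fact p.Prime := ⟨hp⟩
  have hn : (p - 1) + 1 = p := by omega
  apply dav (p - 1) hn a
  intro S hS hsum
  apply hns
  obtain ⟨i0, hi0⟩ := hS
  set L : Fin p := ⟨p - 1, by omega⟩ with hL
  set T : ZMod p := ∑ k ∈ S, b (Fin.castLE (by omega) k) with hT
  set x : Fin p → ZMod p := fun i =>
    if h : (i : ℕ) < p - 1 then (if (⟨(i : ℕ), h⟩ : Fin (p - 1)) ∈ S then 1 else 0)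
    else -(b L)⁻¹ * T with hx
  have hxc : ∀ j : Fin (p - 1), x (Fin.castLE (by omega) j) = if j ∈ S then 1 else 0 := by
    intro j
    have hjlt : ((Fin.castLE (by omega : p - 1 ≤ p) j : Fin p) : ℕ) < p - 1 := j.isLt
    rw [hx]
    simp only
    rw [dif_pos hjlt]
    congr 1
  have hxL : x L = -(b L)⁻¹ * T := by
    rw [hx]
    simp only
    rw [dif_neg (by show ¬ ((p - 1 : ℕ) < p - 1); omega)]
  refine ⟨x, ?_, ?_, Fin.castLE (by omega) i0, L, ?_⟩
  · have hterm : ∀ j : Fin (p - 1),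
        a j * x (Fin.castLE (by omega) j) ^ (p - 1) = if j ∈ S then a j else 0 := by
      intro j
      rw [hxc]
      split_ifs
      · rw [one_pow, mul_one]
      · rw [zero_pow (by omega), mul_zero]
    rw [Finset.sum_congr rfl (fun j _ => hterm j)]
    rw [Finset.sum_ite_mem, Finset.univ_inter]
    exact hsum
  · have hEsub : S.map ⟨Fin.castLE (by omega), Fin.castLE_injective _⟩ ⊆ Finset.univ.erase L := by
      intro i hi
      rw [Finset.mem_map] at hi
      obtain ⟨k, _, rfl⟩ := hi
      refine Finset.mem_erase.2 ⟨?_, Finset.mem_univ _⟩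
      intro hc
      have := congrArg Fin.val hc
      simp only [Function.Embedding.coeFn_mk, Fin.coe_castLE, hL, Fin.val_mk] at this
      have := k.isLt
      omega
    have hvanish : ∀ i ∈ Finset.univ.erase L,
        i ∉ S.map ⟨Fin.castLE (by omega), Fin.castLE_injective _⟩ → b i * x i = 0 := by
      intro i hi hni
      have hilt : (i : ℕ) < p - 1 := by
        have h1 : i ≠ L := (Finset.mem_erase.1 hi).1
        have h2 : (i : ℕ) < p := i.isLt
        have h3 : (i : ℕ) ≠ p - 1 := fun hc => h1 (Fin.ext hc)
        omega
      have hnotS : (⟨(i : ℕ), hilt⟩ : Fin (p - 1)) ∉ S := by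
        intro hc
        apply hni
        rw [Finset.mem_map]
        exact ⟨⟨(i : ℕ), hilt⟩, hc, Fin.ext rfl⟩
      rw [hx]
      simp only
      rw [dif_pos hilt, if_neg hnotS, mul_zero]
    have hmain : ∑ i ∈ Finset.univ.erase L, b i * x i = T := by
      rw [← Finset.sum_subset hEsub hvanish, Finset.sum_map]
      rw [hT]
      refine Finset.sum_congr rfl ?_
      intro k hk
      simp only [Function.Embedding.coeFn_mk]
      rw [hxc, if_pos hk, mul_one]
    have hsplit := Finset.sum_erase_add Finset.univ (fun i => b i * x i) (Finset.mem_univ L)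
    rw [← hsplit, hmain]
    show T + b L * x L = 0
    rw [hxL]
    have hbL : b L * (b L)⁻¹ = 1 := ZMod.mul_inv_of_unit _ (Ne.isUnit hbp)
    linear_combination (-T) * hbL
  · have hilt : ((Fin.castLE (by omega : p - 1 ≤ p) i0 : Fin p) : ℕ) < p - 1 := i0.isLt
    rw [dif_pos hilt, dif_neg (by show ¬ ((p - 1 : ℕ) < p - 1); omega)]
    have heq : (⟨((Fin.castLE (by omega : p - 1 ≤ p) i0 : Fin p) : ℕ), hilt⟩ : Fin (p - 1)) = i0 := by
      apply Fin.ext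
      rfl
    rw [heq, hxc, if_pos hi0, one_pow, mul_one, zero_mul, sub_zero]
    have hp1 : ((p : ZMod p) - 1) = -1 := by
      rw [ZMod.natCast_self, zero_sub]
    rw [hp1]
    intro hc
    rcases mul_eq_zero.1 hc with hc1 | hc1
    · rcases mul_eq_zero.1 hc1 with hc2 | hc2
      · exact (neg_ne_zero.2 one_ne_zero) hc2
      · exact ha i0 hc2
    · exact hbp hc1
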